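/- Let P = (x, α√3) with 0 < x < 1/2 and (1+x)/3 < α < 1 - x. Then the three points U₀ = (2 - x, √3(1 + x(2-x)/(3(1-α)))), U₊ = (2 + x, √3(1 - x(2-x)/(3(1-α)))), and U₋ = (-2 + x, √3(1 - x(2-x)/(3(1-α)))) are all at the same Euclidean distance from P. -/

import Mathlib

open RealInnerProductSpace

theorem stmt_8 (x α : ℝ) (hx0 : 0 < x) (hx : x < 1/2)
    (hα0 : (1 + x)/3 < α) (hα1 : α < 1 - x) :
    let P : EuclideanSpace ℝ (Fin 2) := !₂[x, α * Real.sqrt 3]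
    let U₀ : EuclideanSpace ℝ (Fin 2) := !₂[2 - x, Real.sqrt 3 * (1 + x * (2 - x) / (3 * (1 - α)))]
    let Uplus : EuclideanSpace ℝ (Fin 2) := !₂[2 + x, Real.sqrt 3 * (1 - x * (2 - x) / (3 * (1 - α)))]
    let Uminus : EuclideanSpace ℝ (Fin 2) := !₂[-2 + x, Real.sqrt 3 * (1 - x * (2 - x) / (3 * (1 - α)))]
    dist P U₀ = dist P Uplus ∧ dist P U₀ = dist P Uminus := by
  intro P U₀ Uplus Uminus
  have h1α : (1 : ℝ) - α ≠ 0 := by nlinarith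
  have hs : Real.sqrt 3 ^ 2 = 3 := Real.sq_sqrt (by norm_num)
  have key : ∀ A B : EuclideanSpace ℝ (Fin 2),
      (A 0 - B 0) ^ 2 + (A 1 - B 1) ^ 2 = (P 0 - U₀ 0) ^ 2 + (P 1 - U₀ 1) ^ 2 →
      dist P U₀ = dist A B := by
    intro A B h
    rw [EuclideanSpace.dist_eq, EuclideanSpace.dist_eq, Fin.sum_univ_two, Fin.sum_univ_two]
    simp only [Real.dist_eq, sq_abs]
    rw [h]
  constructor <;> apply key <;>
    simp only [P, U₀, Uplus, Uminus, PiLp.toLp_apply, Matrix.cons_val_zero, Matrix.cons_val_one, Matrix.head_cons] <;>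
    field_simp <;> nlinarith [hs, sq_nonneg x, sq_nonneg (1 - α)]
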